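/- The distribution with density p(x) = exp(-1/(2 ln x))/(√(2π) x (ln x)^{3/2}) for x > 1 (and 0 for x ≤ 1) has Mellin transform M(u) = exp(-√2 √u) for u > 0 — equivalently, if Y = ln X then Y has the Lévy distribution with Laplace transform E[e^{-sY}] = exp(-√(2s)); consequently M(n² u) = M(u)^n, so this distribution is pursuit product casually stable with degenerate normalization. -/

import Mathlib

open Real MeasureTheory Set

noncomputable def φ (u y : ℝ) : ℝ := Real.sqrt u * Real.sqrt y - 1 / (Real.sqrt 2 * Real.sqrt y)
noncomputable def φ' (u y : ℝ) : ℝ :=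
  Real.sqrt u / (2 * Real.sqrt y) + 1 / (2 * Real.sqrt 2 * (y * Real.sqrt y))

lemma phi_hasDeriv (u : ℝ) {y : ℝ} (hy : y ∈ Ioi (0:ℝ)) :
    HasDerivWithinAt (φ u) (φ' u y) (Ioi 0) y := by
  have hy0 : (0:ℝ) < y := hy
  have hsy : (0:ℝ) < Real.sqrt y := Real.sqrt_pos.2 hy0
  have h1 : HasDerivAt (fun y => Real.sqrt y) (1 / (2 * Real.sqrt y)) y :=
    Real.hasDerivAt_sqrt hy0.ne'
  have h2 : HasDerivAt (fun y => Real.sqrt u * Real.sqrt y) (Real.sqrt u * (1 / (2 * Real.sqrt y))) y :=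
    h1.const_mul _
  have h3 : HasDerivAt (fun y => (Real.sqrt y)⁻¹) (-(1 / (2 * Real.sqrt y)) / (Real.sqrt y)^2) y :=
    h1.inv hsy.ne'
  have h4 : HasDerivAt (φ u)
      (Real.sqrt u * (1 / (2 * Real.sqrt y)) - (Real.sqrt 2)⁻¹ * (-(1 / (2 * Real.sqrt y)) / (Real.sqrt y)^2)) y := by
    have h := h2.sub (h3.const_mul ((Real.sqrt 2)⁻¹))
    have : φ u = fun y => Real.sqrt u * Real.sqrt y - (Real.sqrt 2)⁻¹ * (Real.sqrt y)⁻¹ := by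
      funext z; unfold φ; rw [one_div, mul_inv]
    rw [this]
    exact h
  have heq : Real.sqrt u * (1 / (2 * Real.sqrt y)) - (Real.sqrt 2)⁻¹ * (-(1 / (2 * Real.sqrt y)) / (Real.sqrt y)^2)
      = φ' u y := by
    unfold φ'
    have h2s : (0:ℝ) < Real.sqrt 2 := by positivity
    have hyy : Real.sqrt y * Real.sqrt y = y := Real.mul_self_sqrt hy0.le
    rw [← hyy]
    field_simp
    simp only [Real.sqrt_sq hsy.le, Real.sqrt_mul_self hsy.le]
    ring
  exact (heq ▸ h4).hasDerivWithinAt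

lemma phi_injOn {u : ℝ} (hu : 0 < u) : InjOn (φ u) (Ioi 0) := by
  have : StrictMonoOn (φ u) (Ioi 0) := by
    intro a ha b hb hab
    have ha0 : (0:ℝ) < a := ha
    have hb0 : (0:ℝ) < b := hb
    have h1 : Real.sqrt a < Real.sqrt b := Real.sqrt_lt_sqrt ha0.le hab
    have hsa : (0:ℝ) < Real.sqrt a := Real.sqrt_pos.2 ha0
    have hsu : (0:ℝ) < Real.sqrt u := Real.sqrt_pos.2 hu
    have h2s : (0:ℝ) < Real.sqrt 2 := by positivity
    unfold φ
    gcongr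
  exact this.injOn

lemma phi_surj {u : ℝ} (hu : 0 < u) : φ u '' Ioi 0 = univ := by
  apply eq_univ_of_forall
  intro t
  have hsu : (0:ℝ) < Real.sqrt u := Real.sqrt_pos.2 hu
  have h2s : (0:ℝ) < Real.sqrt 2 := by positivity
  have h22 : Real.sqrt 2 * Real.sqrt 2 = 2 := Real.mul_self_sqrt (by norm_num)
  set r := Real.sqrt (t^2 + 2 * Real.sqrt 2 * Real.sqrt u) with hr
  have hrpos : |t| < r := by
    rw [hr, ← Real.sqrt_sq_eq_abs]
    apply Real.sqrt_lt_sqrt (sq_nonneg t)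
    nlinarith
  have hr2 : r^2 = t^2 + 2 * Real.sqrt 2 * Real.sqrt u := Real.sq_sqrt (by nlinarith)
  set w := (t + r) / (2 * Real.sqrt u) with hw
  have hwpos : 0 < w := by
    apply div_pos _ (by positivity)
    have := neg_abs_le t
    linarith
  refine ⟨w^2, mem_Ioi.2 (by positivity), ?_⟩
  have hsw : Real.sqrt (w^2) = w := Real.sqrt_sq hwpos.le
  have hquad : Real.sqrt u * w^2 - t * w = 1 / Real.sqrt 2 := by
    rw [hw]
    field_simp
    linear_combination Real.sqrt 2 * hr2 + (2*Real.sqrt u) * h22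
  unfold φ
  rw [hsw]
  have hqinv : Real.sqrt 2 * (Real.sqrt 2)⁻¹ = 1 := mul_inv_cancel₀ h2s.ne'
  field_simp
  linear_combination Real.sqrt 2 * hquad + hqinv

lemma gauss_transport {u : ℝ} (hu : 0 < u) :
    ∫ y in Ioi (0:ℝ), |φ' u y| * Real.exp (-(φ u y)^2) = Real.sqrt π := by
  have h := integral_image_eq_integral_abs_deriv_smul measurableSet_Ioi
    (fun y hy => phi_hasDeriv u hy) (phi_injOn hu) (fun t => Real.exp (-t^2))
  rw [phi_surj hu] at h
  have hg : ∫ t in (univ : Set ℝ), Real.exp (-t^2) = Real.sqrt π := by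
    rw [MeasureTheory.setIntegral_univ]
    simpa using integral_gaussian 1
  rw [← hg, h]
  simp [smul_eq_mul]

lemma integrable_transport {u : ℝ} (hu : 0 < u) :
    IntegrableOn (fun y => |φ' u y| * Real.exp (-(φ u y)^2)) (Ioi 0) := by
  have h := integrableOn_image_iff_integrableOn_abs_deriv_smul measurableSet_Ioi
    (fun y hy => phi_hasDeriv u hy) (phi_injOn hu) (fun t => Real.exp (-t^2))
  rw [phi_surj hu] at h
  have : IntegrableOn (fun t => Real.exp (-t^2)) (univ : Set ℝ) := by
    rw [integrableOn_univ]
    simpa using integrable_exp_neg_mul_sq (b := 1) one_pos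
  simpa [smul_eq_mul] using h.1 this

lemma invMap_img {u : ℝ} (hu : 0 < u) : (fun y : ℝ => 1/(2*u*y)) '' Ioi 0 = Ioi 0 := by
  apply Subset.antisymm
  · rintro _ ⟨y, hy, rfl⟩
    have : (0:ℝ) < y := hy
    exact mem_Ioi.2 (by positivity)
  · intro z hz
    have hz0 : (0:ℝ) < z := hz
    exact ⟨1/(2*u*z), mem_Ioi.2 (by positivity), by field_simp⟩

lemma invMap_inj {u : ℝ} (hu : 0 < u) : InjOn (fun y : ℝ => 1/(2*u*y)) (Ioi 0) := by
  intro a ha b hb hab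
  have ha0 : (0:ℝ) < a := ha
  have hb0 : (0:ℝ) < b := hb
  field_simp at hab
  exact hab.symm ▸ rfl

lemma invMap_deriv {u : ℝ} (hu : 0 < u) {y : ℝ} (hy : y ∈ Ioi (0:ℝ)) :
    HasDerivWithinAt (fun y : ℝ => 1/(2*u*y)) (-(1/(2*u*y^2))) (Ioi 0) y := by
  have hy0 : (0:ℝ) < y := hy
  have h1 : HasDerivAt (fun y : ℝ => y⁻¹) (-(y^2)⁻¹) y := hasDerivAt_inv hy0.ne'
  have h2 := h1.const_mul ((2*u)⁻¹)
  have hfun : (fun y : ℝ => 1/(2*u*y)) = fun y : ℝ => (2*u)⁻¹ * y⁻¹ := by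
    funext z; rw [one_div, mul_inv]
  have hval : -(1/(2*u*y^2)) = (2*u)⁻¹ * -(y^2)⁻¹ := by field_simp
  rw [hfun, hval]
  exact h2.hasDerivWithinAt

lemma phi_inv {u : ℝ} (hu : 0 < u) {y : ℝ} (hy : 0 < y) :
    φ u (1/(2*u*y)) = -(φ u y) := by
  have hsu : (0:ℝ) < Real.sqrt u := Real.sqrt_pos.2 hu
  have hsy : (0:ℝ) < Real.sqrt y := Real.sqrt_pos.2 hy
  have h2s : (0:ℝ) < Real.sqrt 2 := by positivity
  have hs : Real.sqrt (1/(2*u*y)) = 1/(Real.sqrt 2 * Real.sqrt u * Real.sqrt y) := by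
    rw [one_div, Real.sqrt_inv, mul_assoc, Real.sqrt_mul (by norm_num), Real.sqrt_mul hu.le]
    rw [one_div, mul_assoc]
  unfold φ
  rw [hs]
  field_simp
  ring_nf

lemma symm_eq {u : ℝ} (hu : 0 < u) :
    ∫ y in Ioi (0:ℝ), Real.exp (-(φ u y)^2) * (Real.sqrt u / (2 * Real.sqrt y))
      = ∫ y in Ioi (0:ℝ), Real.exp (-(φ u y)^2) * (1 / (2 * Real.sqrt 2 * (y * Real.sqrt y))) := by
  have h := integral_image_eq_integral_abs_deriv_smul measurableSet_Ioi
    (fun y hy => invMap_deriv hu hy) (invMap_inj hu)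
    (fun y => Real.exp (-(φ u y)^2) * (Real.sqrt u / (2 * Real.sqrt y)))
  rw [invMap_img hu] at h
  rw [h]
  apply setIntegral_congr_fun measurableSet_Ioi
  intro y hy
  have hy0 : (0:ℝ) < y := hy
  have hsu : (0:ℝ) < Real.sqrt u := Real.sqrt_pos.2 hu
  have hsy : (0:ℝ) < Real.sqrt y := Real.sqrt_pos.2 hy0
  have h2s : (0:ℝ) < Real.sqrt 2 := by positivity
  have hs : Real.sqrt (1/(2*u*y)) = 1/(Real.sqrt 2 * Real.sqrt u * Real.sqrt y) := by
    rw [one_div, Real.sqrt_inv, mul_assoc, Real.sqrt_mul (by norm_num), Real.sqrt_mul hu.le]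
    rw [one_div, mul_assoc]
  simp only [smul_eq_mul, phi_inv hu hy0, neg_sq, hs]
  rw [abs_neg, abs_of_nonneg (by positivity)]
  rw [eq_comm]
  field_simp
  ring_nf
  rw [Real.sq_sqrt hu.le, Real.sq_sqrt hy0.le, Real.sq_sqrt (by norm_num : (0:ℝ) ≤ 2)]
  ring

lemma phi_meas (u : ℝ) : Measurable (φ u) := by
  unfold φ
  fun_prop

lemma J_eq {u : ℝ} (hu : 0 < u) :
    ∫ y in Ioi (0:ℝ), Real.exp (-(φ u y)^2) * (1 / (y * Real.sqrt y)) = Real.sqrt (2*π) := by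
  set A : ℝ → ℝ := fun y => Real.exp (-(φ u y)^2) * (Real.sqrt u / (2 * Real.sqrt y)) with hA
  set B : ℝ → ℝ := fun y => Real.exp (-(φ u y)^2) * (1 / (2 * Real.sqrt 2 * (y * Real.sqrt y))) with hB
  have hABeq : ∀ y ∈ Ioi (0:ℝ), |φ' u y| * Real.exp (-(φ u y)^2) = A y + B y := by
    intro y hy
    have hy0 : (0:ℝ) < y := hy
    have hsy : (0:ℝ) < Real.sqrt y := Real.sqrt_pos.2 hy0
    have h2s : (0:ℝ) < Real.sqrt 2 := by positivity
    have hsu : (0:ℝ) ≤ Real.sqrt u := Real.sqrt_nonneg u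
    rw [abs_of_nonneg (by unfold φ'; positivity)]
    unfold φ'
    simp only [hA, hB]
    ring
  have hsum_int : IntegrableOn (fun y => A y + B y) (Ioi 0) :=
    (integrable_transport hu).congr_fun hABeq measurableSet_Ioi
  have hsum_eq : ∫ y in Ioi (0:ℝ), (A y + B y) = Real.sqrt π := by
    rw [← gauss_transport hu]
    exact (setIntegral_congr_fun measurableSet_Ioi hABeq).symm
  have hAmeas : AEStronglyMeasurable A (volume.restrict (Ioi 0)) := by
    apply Measurable.aestronglyMeasurable
    apply Measurable.mul
    · exact (((phi_meas u).pow_const 2).neg).exp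
    · fun_prop
  have hBmeas : AEStronglyMeasurable B (volume.restrict (Ioi 0)) := by
    apply Measurable.aestronglyMeasurable
    apply Measurable.mul
    · exact (((phi_meas u).pow_const 2).neg).exp
    · fun_prop
  have hAnn : ∀ y, 0 ≤ A y := fun y => by simp only [hA]; positivity
  have hBnn : ∀ y, 0 ≤ B y := by
    intro y
    simp only [hB]
    rcases le_or_gt 0 y with h|h
    · positivity
    · have hz : Real.sqrt y = 0 := Real.sqrt_eq_zero_of_nonpos h.le
      simp [hz]
  have hAint : IntegrableOn A (Ioi 0) := by
    apply Integrable.mono hsum_int hAmeas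
    filter_upwards with y
    rw [Real.norm_eq_abs, Real.norm_eq_abs, abs_of_nonneg (hAnn y),
      abs_of_nonneg (add_nonneg (hAnn y) (hBnn y))]
    linarith [hBnn y]
  have hBint : IntegrableOn B (Ioi 0) := by
    apply Integrable.mono hsum_int hBmeas
    filter_upwards with y
    rw [Real.norm_eq_abs, Real.norm_eq_abs, abs_of_nonneg (hBnn y),
      abs_of_nonneg (add_nonneg (hAnn y) (hBnn y))]
    linarith [hAnn y]
  have hsplit : (∫ y in Ioi (0:ℝ), A y) + (∫ y in Ioi (0:ℝ), B y) = Real.sqrt π := by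
    rw [← integral_add hAint hBint]
    exact hsum_eq
  have hAB : (∫ y in Ioi (0:ℝ), A y) = ∫ y in Ioi (0:ℝ), B y := symm_eq hu
  have hBval : (∫ y in Ioi (0:ℝ), B y) = Real.sqrt π / 2 := by
    rw [hAB] at hsplit; linarith
  have h2s : (0:ℝ) < Real.sqrt 2 := by positivity
  have hBdecomp : ∀ y : ℝ, B y = (1/(2*Real.sqrt 2)) * (Real.exp (-(φ u y)^2) * (1 / (y * Real.sqrt y))) := by
    intro y
    simp only [hB]
    rw [show (1:ℝ)/(2 * Real.sqrt 2 * (y * Real.sqrt y)) = 1/(2*Real.sqrt 2) * (1/(y * Real.sqrt y)) by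
      rw [div_mul_div_comm, one_mul]]
    ring
  have : (∫ y in Ioi (0:ℝ), B y)
      = (1/(2*Real.sqrt 2)) * ∫ y in Ioi (0:ℝ), Real.exp (-(φ u y)^2) * (1 / (y * Real.sqrt y)) := by
    rw [← integral_const_mul]
    exact setIntegral_congr_fun measurableSet_Ioi (fun y _ => hBdecomp y)
  rw [this] at hBval
  have h22 : Real.sqrt 2 * Real.sqrt 2 = 2 := Real.mul_self_sqrt (by norm_num)
  have := hBval
  rw [Real.sqrt_mul (by norm_num : (0:ℝ) ≤ 2)]
  field_simp at this ⊢
  linarith [this]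

/-- The distribution with density `p x = exp(-1/(2 ln x))/(√(2π) x (ln x)^(3/2))` for `x > 1`
(the exponential of a Lévy random variable) has Mellin transform `M u = E[X^{-u}] = exp(-√2 √u)`
for `u > 0`; consequently `M (n² u) = M u ^ n`, so this distribution is pursuit product
casually stable with degenerate normalization. -/
theorem log_levy_mellin_and_pursuit_product_casual_stable (u : ℝ) (hu : 0 < u) :
    (∫ x in Set.Ioi (1 : ℝ),
        x ^ (-u) * (Real.exp (-1 / (2 * Real.log x))
          / (Real.sqrt (2 * π) * x * (Real.log x) ^ ((3 : ℝ) / 2))))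
      = Real.exp (-Real.sqrt 2 * Real.sqrt u) ∧
    ∀ n : ℕ, 1 ≤ n →
      Real.exp (-Real.sqrt 2 * Real.sqrt ((n : ℝ) ^ 2 * u))
        = (Real.exp (-Real.sqrt 2 * Real.sqrt u)) ^ n := by
  constructor
  · -- change of variables x = exp y
    have himg : Real.exp '' Ioi 0 = Ioi 1 := by
      apply Subset.antisymm
      · rintro _ ⟨y, hy, rfl⟩
        exact mem_Ioi.2 (by simpa using Real.exp_lt_exp.2 (mem_Ioi.1 hy))
      · intro x hx
        have hx1 : (1:ℝ) < x := hx
        exact ⟨Real.log x, mem_Ioi.2 (Real.log_pos hx1), Real.exp_log (by linarith)⟩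
    have h := integral_image_eq_integral_abs_deriv_smul (s := Ioi (0:ℝ)) (f := Real.exp) (f' := Real.exp)
      measurableSet_Ioi (fun y _ => (Real.hasDerivAt_exp y).hasDerivWithinAt)
      (Real.exp_injective.injOn)
      (fun x => x ^ (-u) * (Real.exp (-1 / (2 * Real.log x))
          / (Real.sqrt (2 * π) * x * (Real.log x) ^ ((3 : ℝ) / 2))))
    rw [himg] at h
    rw [h]
    have hcong : ∀ y ∈ Ioi (0:ℝ),
        |Real.exp y| • ((Real.exp y) ^ (-u) * (Real.exp (-1 / (2 * Real.log (Real.exp y)))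
          / (Real.sqrt (2 * π) * Real.exp y * (Real.log (Real.exp y)) ^ ((3 : ℝ) / 2))))
        = (Real.exp (-Real.sqrt 2 * Real.sqrt u) / Real.sqrt (2*π))
            * (Real.exp (-(φ u y)^2) * (1 / (y * Real.sqrt y))) := by
      intro y hy
      have hy0 : (0:ℝ) < y := hy
      have hsy : (0:ℝ) < Real.sqrt y := Real.sqrt_pos.2 hy0
      have hsu : (0:ℝ) < Real.sqrt u := Real.sqrt_pos.2 hu
      have h2s : (0:ℝ) < Real.sqrt 2 := by positivity
      have hsp : (0:ℝ) < Real.sqrt (2*π) := Real.sqrt_pos.2 (by positivity)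
      have hey : (0:ℝ) < Real.exp y := Real.exp_pos y
      rw [smul_eq_mul, abs_of_pos hey, Real.log_exp]
      -- rpow of exp
      have hrpow : (Real.exp y) ^ (-u) = Real.exp (-(u*y)) := by
        rw [Real.rpow_def_of_pos hey, Real.log_exp]
        ring_nf
      -- y^(3/2) = y * sqrt y
      have h32 : y ^ ((3:ℝ)/2) = y * Real.sqrt y := by
        rw [show (3:ℝ)/2 = 1 + 1/2 by norm_num, Real.rpow_add hy0, Real.rpow_one,
          ← Real.sqrt_eq_rpow]
      -- phi square identity
      have hph : (φ u y)^2 = u*y + 1/(2*y) - Real.sqrt 2 * Real.sqrt u := by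
        unfold φ
        have huu : Real.sqrt u * Real.sqrt u = u := Real.mul_self_sqrt hu.le
        have hyy : Real.sqrt y * Real.sqrt y = y := Real.mul_self_sqrt hy0.le
        have h22 : Real.sqrt 2 * Real.sqrt 2 = 2 := Real.mul_self_sqrt (by norm_num)
        field_simp
        ring_nf
        rw [Real.sq_sqrt hu.le, Real.sq_sqrt hy0.le, Real.sq_sqrt (by norm_num : (0:ℝ) ≤ 2),
          show Real.sqrt y^4 = y^2 from by rw [show (4:ℕ) = 2*2 from rfl, pow_mul, Real.sq_sqrt hy0.le],
          show Real.sqrt 2^3 = 2 * Real.sqrt 2 from by rw [pow_succ, Real.sq_sqrt (by norm_num : (0:ℝ) ≤ 2)]]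
        ring
      have hsplit : Real.exp (-(φ u y)^2)
          = Real.exp (Real.sqrt 2 * Real.sqrt u) * (Real.exp (-(u*y)) * Real.exp (-1/(2*y))) := by
        rw [hph, ← Real.exp_add, ← Real.exp_add]
        congr 1
        ring
      have hee : Real.exp (-Real.sqrt 2 * Real.sqrt u) * Real.exp (Real.sqrt 2 * Real.sqrt u) = 1 := by
        rw [← Real.exp_add]
        rw [show -Real.sqrt 2 * Real.sqrt u + Real.sqrt 2 * Real.sqrt u = 0 by ring, Real.exp_zero]
      rw [hrpow, h32, hsplit]
      rw [show (Real.exp (-Real.sqrt 2 * Real.sqrt u) / Real.sqrt (2*π))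
            * (Real.exp (Real.sqrt 2 * Real.sqrt u) * (Real.exp (-(u*y)) * Real.exp (-1/(2*y)))
              * (1 / (y * Real.sqrt y)))
          = (Real.exp (-Real.sqrt 2 * Real.sqrt u) * Real.exp (Real.sqrt 2 * Real.sqrt u))
            * ((Real.exp (-(u*y)) * Real.exp (-1/(2*y))) / (Real.sqrt (2*π) * (y * Real.sqrt y))) by ring,
        hee, one_mul]
      field_simp
    rw [setIntegral_congr_fun measurableSet_Ioi hcong, integral_const_mul, J_eq hu]
    have hsp : (0:ℝ) < Real.sqrt (2*π) := Real.sqrt_pos.2 (by positivity)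
    rw [div_mul_cancel₀ _ hsp.ne']
  · intro n hn
    have h1 : Real.sqrt ((n:ℝ)^2 * u) = (n:ℝ) * Real.sqrt u := by
      rw [Real.sqrt_mul (by positivity), Real.sqrt_sq (by positivity)]
    rw [h1, show -Real.sqrt 2 * ((n:ℝ) * Real.sqrt u) = (n:ℝ) * (-Real.sqrt 2 * Real.sqrt u) by ring,
      Real.exp_nat_mul]
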